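/- Let (H,μ) be a countable unital locally standard measure algebra and let St_n ⊂ H be a standard measure subalgebra containing the identity of H. Then every automorphism of the measure algebra St_n extends to an automorphism of the measure algebra H. Moreover, St_n is a tensor factor of H: there is a measure subalgebra H̄ ⊆ H with St_n ⊗ H̄ = H. -/

import Mathlib

open scoped BigOperators

noncomputable section

/-! ### Steinitz numbers -/

/-- A Steinitz number: a formal product `∏ p ^ r_p` over all primes, with exponents
`r_p ∈ ℕ ∪ {∞}`, encoded as the function sending each prime to its exponent. -/
def SteinitzNumber : Type := Nat.Primes → ℕ∞

namespace SteinitzNumber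

instance : One SteinitzNumber := ⟨fun _ => 0⟩

instance : Mul SteinitzNumber := ⟨fun s t p => s p + t p⟩

/-- The Steinitz number associated with a positive integer `n`. -/
def ofNat (n : ℕ) : SteinitzNumber := fun p => (n.factorization p : ℕ∞)

/-- `b ∈ Ω(s)`: the positive integer `b` divides the Steinitz number `s`. -/
def NatDvd (b : ℕ) (s : SteinitzNumber) : Prop :=
  0 < b ∧ ∀ p : Nat.Primes, (b.factorization p : ℕ∞) ≤ s p

/-- The quotient `s / b` of a Steinitz number by a positive integer dividing it. -/
def divNat (s : SteinitzNumber) (b : ℕ) : SteinitzNumber :=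
  fun p => s p - (b.factorization p : ℕ∞)

/-- An infinite Steinitz number is one which is not a positive integer. -/
def Infinite (s : SteinitzNumber) : Prop := ∀ n : ℕ, s ≠ ofNat n

/-- Steinitz numbers `s` and `t` are rationally connected: `t = (a/b)·s` for positive
integers `a, b` (expressed by cross multiplication). -/
def RationallyConnected (s t : SteinitzNumber) : Prop :=
  ∃ a b : ℕ, 0 < a ∧ 0 < b ∧ ofNat b * t = ofNat a * s

/-- `s₁` finitely divides `s₂`: `s₁ = s₂ / b` for some `b ∈ Ω(s₂)`. -/
def FinDvd (s₁ s₂ : SteinitzNumber) : Prop :=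
  ∃ b : ℕ, NatDvd b s₂ ∧ ofNat b * s₁ = s₂

/-- `s₁ ≤ s₂` iff `s₁ = (a/b)·s₂` with `b ∈ Ω(s₂)` and `1 ≤ a ≤ b`. -/
def Le (s₁ s₂ : SteinitzNumber) : Prop :=
  ∃ a b : ℕ, 0 < a ∧ a ≤ b ∧ NatDvd b s₂ ∧ ofNat b * s₁ = ofNat a * s₂

/-- A saturated set of Steinitz numbers. -/
def Saturated (S : Set SteinitzNumber) : Prop :=
  (∀ s₁ ∈ S, ∀ s₂ ∈ S, RationallyConnected s₁ s₂) ∧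
  (∀ s₂ ∈ S, ∀ s₁, FinDvd s₁ s₂ → s₁ ∈ S) ∧
  (∀ s ∈ S, ∀ n : ℕ, ofNat n * s ∈ S → ∀ k : ℕ, 1 ≤ k → k ≤ n → ofNat k * s ∈ S)

/-- `S(∞, s) = { (a/b)·s : a ∈ ℕ, b ∈ Ω(s) }`. -/
def SInf (s : SteinitzNumber) : Set SteinitzNumber :=
  {t | ∃ a b : ℕ, 0 < a ∧ NatDvd b s ∧ ofNat b * t = ofNat a * s}

/-- `S(r, s) = { (a/b)·s : a, b ∈ ℕ, b ∈ Ω(s), a ≤ r·b }`. -/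
def SBdd (r : ℝ) (s : SteinitzNumber) : Set SteinitzNumber :=
  {t | ∃ a b : ℕ, 0 < a ∧ NatDvd b s ∧ (a : ℝ) ≤ r * b ∧ ofNat b * t = ofNat a * s}

/-- `S⁺(r, s) = { (a/b)·s : a, b ∈ ℕ, b ∈ Ω(s), a < r·b }`. -/
def SBddPlus (r : ℝ) (s : SteinitzNumber) : Set SteinitzNumber :=
  {t | ∃ a b : ℕ, 0 < a ∧ NatDvd b s ∧ (a : ℝ) < r * b ∧ ofNat b * t = ofNat a * s}

end SteinitzNumber

/-! ### Measure algebras -/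

/-- A measure algebra: a Boolean algebra (an associative, commutative algebra over `𝔽₂`
in which every element is idempotent) equipped with a measure `μ` which is positive on
nonzero elements and additive on orthogonal pairs. -/
structure MeasureAlgebra : Type 1 where
  carrier : Type
  [ring : NonUnitalCommRing carrier]
  idem : ∀ x : carrier, x * x = x
  mu : carrier → ℝ
  mu_nonneg : ∀ a, 0 ≤ mu a
  mu_eq_zero_iff : ∀ a, mu a = 0 ↔ a = 0
  mu_add : ∀ a b : carrier, a * b = 0 → mu (a + b) = mu a + mu b

attribute [instance] MeasureAlgebra.ring

namespace MeasureAlgebra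

/-- Isomorphism of measure algebras: a Boolean algebra isomorphism preserving the measures. -/
def Isomorphic (H₁ H₂ : MeasureAlgebra) : Prop :=
  ∃ φ : H₁.carrier ≃+* H₂.carrier, ∀ a, H₂.mu (φ a) = H₁.mu a

/-- Scalar equivalence of measure algebras: a Boolean algebra isomorphism multiplying
the measure by a positive constant `α`. -/
def ScalarEquivalent (H₁ H₂ : MeasureAlgebra) : Prop :=
  ∃ α : ℝ, 0 < α ∧ ∃ φ : H₁.carrier ≃+* H₂.carrier, ∀ a, H₂.mu (φ a) = α * H₁.mu a

/-- The measure subalgebra of a measure algebra supported on a subring, with the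
restricted measure. -/
def restrict (H : MeasureAlgebra) (S : NonUnitalSubring H.carrier) : MeasureAlgebra where
  carrier := S
  idem := fun x => Subtype.ext (H.idem x.1)
  mu := fun x => H.mu x.1
  mu_nonneg := fun a => H.mu_nonneg a.1
  mu_eq_zero_iff := fun a => by
    rw [H.mu_eq_zero_iff a.1]
    exact ⟨fun h => Subtype.ext h, fun h => congrArg Subtype.val h⟩
  mu_add := fun a b hab => H.mu_add a.1 b.1 (congrArg Subtype.val hab)

/-- The standard measure algebra `Stₙ = 𝔽₂ⁿ` with `μ(x₁, …, xₙ) = (x₁ + ⋯ + xₙ)/n`. -/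
def St (n : ℕ) : MeasureAlgebra where
  carrier := Fin n → ZMod 2
  idem := fun x => funext fun i => by
    have h : ∀ a : ZMod 2, a * a = a := by decide
    exact h (x i)
  mu := fun x => (∑ i, ((x i).val : ℝ)) / n
  mu_nonneg := fun a => by positivity
  mu_eq_zero_iff := fun a => by
    constructor
    · intro h
      rcases Nat.eq_zero_or_pos n with hn | hn
      · subst hn; exact funext fun i => i.elim0
      · have hne : ((n : ℝ)) ≠ 0 := by positivity
        have h2 : (∑ i, ((a i).val : ℝ)) = 0 := by
          rcases div_eq_zero_iff.mp h with h' | h'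
          · exact h'
          · exact absurd h' hne
        have h3 := (Finset.sum_eq_zero_iff_of_nonneg
          (fun i _ => by positivity : ∀ i ∈ Finset.univ, (0:ℝ) ≤ ((a i).val : ℝ))).mp h2
        funext i
        have h4 : ((a i).val : ℝ) = 0 := h3 i (Finset.mem_univ i)
        have h5 : (a i).val = 0 := by exact_mod_cast h4
        exact (ZMod.val_eq_zero _).mp h5
    · intro h; subst h; simp
  mu_add := fun a b hab => by
    have key : ∀ u v : ZMod 2, u * v = 0 → (u + v).val = u.val + v.val := by decide
    have h : ∀ i, (((a + b) i).val : ℝ) = ((a i).val : ℝ) + ((b i).val : ℝ) := by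
      intro i
      have h0 : a i * b i = 0 := congrFun hab i
      have h1 := key (a i) (b i) h0
      show (((a i + b i)).val : ℝ) = _
      rw [h1]
      push_cast
      ring
    show (∑ i, (((a + b) i).val : ℝ)) / n
        = (∑ i, ((a i).val : ℝ)) / n + (∑ i, ((b i).val : ℝ)) / n
    rw [← add_div, ← Finset.sum_add_distrib]
    congr 1
    exact Finset.sum_congr rfl fun i _ => h i

/-- A measure algebra is unital if it has an identity element of measure `1`. -/
def Unital (H : MeasureAlgebra) : Prop :=
  ∃ e : H.carrier, (∀ x, e * x = x) ∧ H.mu e = 1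

/-- A measure algebra is locally standard if every finite subset is contained in a
measure subalgebra scalar equivalent to a standard one. -/
def LocallyStandard (H : MeasureAlgebra) : Prop :=
  ∀ t : Finset H.carrier, ∃ (S : NonUnitalSubring H.carrier) (n : ℕ), 0 < n ∧
    (↑t : Set H.carrier) ⊆ S ∧ (H.restrict S).ScalarEquivalent (St n)

/-- For an (idempotent) element `h`, the subring `hH = {x | h·x = x}`. -/
def cornerSubring (H : MeasureAlgebra) (h : H.carrier) : NonUnitalSubring H.carrier where
  carrier := {x | h * x = x}
  zero_mem' := mul_zero h
  add_mem' := by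
    intro a b ha hb
    simp only [Set.mem_setOf_eq] at *
    rw [mul_add, ha, hb]
  neg_mem' := by
    intro a ha
    simp only [Set.mem_setOf_eq] at *
    rw [mul_neg, ha]
  mul_mem' := by
    intro a b ha hb
    simp only [Set.mem_setOf_eq] at *
    rw [← mul_assoc, ha]

/-- The unital measure algebra `H_h = (hH, μ(·)/μ(h))`. -/
def corner (H : MeasureAlgebra) (h : H.carrier) : MeasureAlgebra where
  carrier := H.cornerSubring h
  idem := fun x => Subtype.ext (H.idem x.1)
  mu := fun x => H.mu x.1 / H.mu h
  mu_nonneg := fun a => div_nonneg (H.mu_nonneg a.1) (H.mu_nonneg h)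
  mu_eq_zero_iff := fun a => by
    constructor
    · intro ha
      rcases div_eq_zero_iff.mp ha with h' | h'
      · exact Subtype.ext ((H.mu_eq_zero_iff a.1).mp h')
      · have hh : h = 0 := (H.mu_eq_zero_iff h).mp h'
        have h2 : h * (a : H.carrier) = a := a.2
        apply Subtype.ext
        show (a : H.carrier) = 0
        generalize hx : (a : H.carrier) = x at h2 ⊢
        rw [← h2, hh, zero_mul]
    · intro h'
      subst h'
      have h0 : H.mu ((0 : H.cornerSubring h) : H.carrier) = 0 :=
        (H.mu_eq_zero_iff _).mpr rfl
      show H.mu ((0 : H.cornerSubring h) : H.carrier) / H.mu h = 0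
      rw [h0, zero_div]
  mu_add := fun a b hab => by
    have : H.mu ((a : H.carrier) + b) = H.mu a + H.mu b :=
      H.mu_add a.1 b.1 (congrArg Subtype.val hab)
    show H.mu ((a + b : H.cornerSubring h) : H.carrier) / H.mu h = _
    rw [show ((a + b : H.cornerSubring h) : H.carrier) = (a : H.carrier) + b from rfl,
      this, add_div]

/-- `D(H)`: the set of `n` such that `H` has a subalgebra containing the identity of `H`
and isomorphic to the standard measure algebra `Stₙ`. -/
def D (H : MeasureAlgebra) : Set ℕ :=
  {n | ∃ S : NonUnitalSubring H.carrier,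
    (∃ e ∈ S, ∀ x : H.carrier, e * x = x) ∧ (H.restrict S).Isomorphic (St n)}

/-- The Steinitz number `st(H)` of a (unital locally standard) measure algebra:
the least common multiple of `D(H)`. -/
def st (H : MeasureAlgebra) : SteinitzNumber :=
  fun p => ⨆ n ∈ H.D, (n.factorization p : ℕ∞)

/-- The spectrum of a measure algebra: the set of Steinitz numbers `st(H_h)` for `h ≠ 0`. -/
def Spec (H : MeasureAlgebra) : Set SteinitzNumber :=
  {s | ∃ h : H.carrier, h ≠ 0 ∧ (H.corner h).st = s}

end MeasureAlgebra

namespace MeasureAlgebra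

/-- The multiplication map `S ⊗ T → H` for two measure subalgebras `S, T` of `H`
(the tensor product of `𝔽₂`-modules of characteristic-two abelian groups agrees with
the tensor product over `ℤ`). -/
def mulTensor (H : MeasureAlgebra) (S T : NonUnitalSubring H.carrier) :
    TensorProduct ℤ ↥S ↥T →ₗ[ℤ] H.carrier :=
  TensorProduct.lift
    (LinearMap.mk₂ ℤ (fun (s : ↥S) (t : ↥T) => (s : H.carrier) * (t : H.carrier))
      (fun m₁ m₂ n => by push_cast; exact add_mul _ _ _)
      (fun c m n => smul_mul_assoc c (m : H.carrier) (n : H.carrier))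
      (fun m n₁ n₂ => by push_cast; exact mul_add _ _ _)
      (fun c m n => mul_smul_comm c (m : H.carrier) (n : H.carrier)))

/-- `H = S ⊗ T` as measure algebras: the multiplication map `S ⊗ T → H` is bijective
and the measure is multiplicative on products, `μ(s·t) = μ(s)·μ(t)`. -/
def IsTensorFactorization (H : MeasureAlgebra) (S T : NonUnitalSubring H.carrier) : Prop :=
  (∀ s ∈ S, ∀ t ∈ T, H.mu (s * t) = H.mu s * H.mu t) ∧
  Function.Bijective (H.mulTensor S T)

end MeasureAlgebra

open MeasureAlgebra

namespace Lemma7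
open scoped Classical

variable (H : MeasureAlgebra)

lemma char2 (x : H.carrier) : x + x = 0 := by
  have h1 : (x + x) * (x + x) = x + x + (x + x) := by
    rw [mul_add, add_mul]; simp only [H.idem]
  have h2 : x + x + (x + x) = x + x + 0 := by
    rw [add_zero, ← h1]; exact H.idem (x + x)
  exact add_left_cancel h2

lemma mu_pos (x : H.carrier) (hx : x ≠ 0) : 0 < H.mu x :=
  lt_of_le_of_ne (H.mu_nonneg x) (fun h => hx ((H.mu_eq_zero_iff x).mp h.symm))

section ortho
variable {ι : Type*} [DecidableEq ι] (g : ι → H.carrier)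

lemma sum_mul_sum_ortho (horth : ∀ a b, a ≠ b → g a * g b = 0) (A B : Finset ι) :
    (∑ a ∈ A, g a) * (∑ b ∈ B, g b) = ∑ c ∈ A ∩ B, g c := by
  rw [Finset.sum_mul_sum]
  rw [← Finset.sum_filter_add_sum_filter_not A (· ∈ B)]
  have h1 : ∀ a ∈ A.filter (· ∈ B), ∑ b ∈ B, g a * g b = g a := by
    intro a ha
    simp only [Finset.mem_filter] at ha
    rw [Finset.sum_eq_single_of_mem a ha.2]
    · exact H.idem _
    · intro b hb hba; exact horth a b (Ne.symm hba)
  have h2 : ∀ a ∈ A.filter (¬ · ∈ B), ∑ b ∈ B, g a * g b = 0 := by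
    intro a ha
    simp only [Finset.mem_filter] at ha
    apply Finset.sum_eq_zero
    intro b hb
    exact horth a b (fun h => ha.2 (h ▸ hb))
  rw [Finset.sum_congr rfl h1, Finset.sum_congr rfl h2, Finset.sum_const_zero, add_zero, Finset.filter_mem_eq_inter]

lemma mu_sum_ortho (horth : ∀ a b, a ≠ b → g a * g b = 0) (A : Finset ι) :
    H.mu (∑ a ∈ A, g a) = ∑ a ∈ A, H.mu (g a) := by
  induction A using Finset.induction_on with
  | empty => simp [(H.mu_eq_zero_iff 0).mpr rfl]
  | @insert a A ha ih =>
    rw [Finset.sum_insert ha, Finset.sum_insert ha, ← ih]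
    apply H.mu_add
    have : g a = ∑ x ∈ {a}, g x := by simp
    rw [this, sum_mul_sum_ortho H g horth]
    have : ({a} : Finset ι) ∩ A = ∅ := by
      ext x; simp only [Finset.mem_inter, Finset.mem_singleton, Finset.notMem_empty,
        iff_false, not_and]
      rintro rfl; exact ha
    rw [this, Finset.sum_empty]

lemma sum_ortho_inj (horth : ∀ a b, a ≠ b → g a * g b = 0) (hnz : ∀ a, g a ≠ 0) {A B : Finset ι}
    (hAB : ∑ a ∈ A, g a = ∑ b ∈ B, g b) : A = B := by
  have key : ∀ C D : Finset ι, (∑ a ∈ C, g a = ∑ b ∈ D, g b) → C ⊆ D := by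
    intro C D hCD
    have h0 : ∑ c ∈ C ∩ D, g c = ∑ c ∈ C, g c := by
      calc ∑ c ∈ C ∩ D, g c = (∑ a ∈ C, g a) * (∑ b ∈ D, g b) :=
            (sum_mul_sum_ortho H g horth C D).symm
        _ = (∑ b ∈ D, g b) * (∑ b ∈ D, g b) := by rw [hCD]
        _ = ∑ b ∈ D, g b := H.idem _
        _ = ∑ c ∈ C, g c := hCD.symm
    have h1 := congrArg H.mu h0
    rw [mu_sum_ortho H g horth, mu_sum_ortho H g horth] at h1
    by_contra hsub
    obtain ⟨x, hxC, hxD⟩ := Finset.not_subset.mp hsub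
    have hlt : ∑ c ∈ C ∩ D, H.mu (g c) < ∑ c ∈ C, H.mu (g c) := by
      apply Finset.sum_lt_sum_of_subset Finset.inter_subset_left (i := x) hxC
      · simp [hxD]
      · exact mu_pos H _ (hnz x)
      · intro j _ _; exact H.mu_nonneg _
    exact absurd h1 (ne_of_lt hlt)
  exact Finset.Subset.antisymm (key A B hAB) (key B A hAB.symm)

end ortho

/-- In any additive comm monoid where each `g a` satisfies `g a + g a = 0`,
subset sums add via symmetric difference. -/
lemma sum_add_sum_symmDiff {M : Type*} [AddCommGroup M] {ι : Type*} [DecidableEq ι]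
    (g : ι → M) (h2 : ∀ a, g a + g a = 0) (A B : Finset ι) :
    (∑ a ∈ A, g a) + (∑ b ∈ B, g b) = ∑ c ∈ symmDiff A B, g c := by
  classical
  have hA : A = (A \ B) ∪ (A ∩ B) := by
    ext x; by_cases hx : x ∈ B <;> simp [hx, Finset.mem_sdiff, Finset.mem_inter, Finset.mem_union] <;> tauto
  have hB : B = (B \ A) ∪ (A ∩ B) := by
    ext x; by_cases hx : x ∈ A <;> simp [hx, Finset.mem_sdiff, Finset.mem_inter, Finset.mem_union] <;> tauto
  have hd1 : Disjoint (A \ B) (A ∩ B) := by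
    rw [Finset.disjoint_left]; intro x hx hx2
    simp only [Finset.mem_sdiff, Finset.mem_inter] at *; tauto
  have hd2 : Disjoint (B \ A) (A ∩ B) := by
    rw [Finset.disjoint_left]; intro x hx hx2
    simp only [Finset.mem_sdiff, Finset.mem_inter] at *; tauto
  have hd3 : Disjoint (A \ B) (B \ A) := by
    rw [Finset.disjoint_left]; intro x hx hx2
    simp only [Finset.mem_sdiff] at *; tauto
  have hsd : symmDiff A B = (A \ B) ∪ (B \ A) := rfl
  have e1 : ∑ a ∈ A, g a = ∑ a ∈ A \ B, g a + ∑ a ∈ A ∩ B, g a := by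
    rw [← Finset.sum_union hd1, ← hA]
  have e2 : ∑ a ∈ B, g a = ∑ a ∈ B \ A, g a + ∑ a ∈ A ∩ B, g a := by
    rw [← Finset.sum_union hd2, ← hB]
  have hz : ∑ c ∈ A ∩ B, g c + ∑ c ∈ A ∩ B, g c = 0 := by
    rw [← Finset.sum_add_distrib]
    exact Finset.sum_eq_zero fun x _ => h2 x
  calc (∑ a ∈ A, g a) + (∑ b ∈ B, g b)
      = (∑ a ∈ A \ B, g a + ∑ a ∈ B \ A, g a) + (∑ c ∈ A ∩ B, g c + ∑ c ∈ A ∩ B, g c) := by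
        rw [e1, e2]; abel
    _ = ∑ c ∈ symmDiff A B, g c := by
        rw [hz, add_zero, hsd, Finset.sum_union hd3]


/-! ### Atoms of a standard subalgebra -/

lemma atoms_of_iso (e : H.carrier) (he : ∀ x, e * x = x)
    (R : NonUnitalSubring H.carrier) (heR : e ∈ R) (m : ℕ)
    (hiso : (H.restrict R).Isomorphic (MeasureAlgebra.St m)) :
    ∃ g : Fin m → H.carrier, (∀ l, g l ∈ R) ∧
      (∀ a b, a ≠ b → g a * g b = 0) ∧
      (∀ l, H.mu (g l) = 1 / m) ∧
      (∑ l, g l = e) ∧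
      (∀ x ∈ R, ∃ A : Finset (Fin m), x = ∑ l ∈ A, g l) := by
  classical
  obtain ⟨ψ0, hψ0⟩ := hiso
  obtain ⟨ψ, rfl⟩ : ∃ ψ : ↥R ≃+* (MeasureAlgebra.St m).carrier, ψ = ψ0 := ⟨ψ0, rfl⟩
  have hψ : ∀ a : ↥R, (MeasureAlgebra.St m).mu (ψ a) = H.mu (a : H.carrier) := hψ0
  clear hψ0
  set δ : Fin m → (MeasureAlgebra.St m).carrier := fun l i => if i = l then 1 else 0 with hδ
  refine ⟨fun l => ((ψ.symm (δ l) : ↥R) : H.carrier), fun l => (ψ.symm (δ l)).2, ?_, ?_, ?_, ?_⟩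
  · -- orthogonality
    intro a b hab
    have h0 : δ a * δ b = 0 := by
      funext i
      show (if i = a then (1 : ZMod 2) else 0) * (if i = b then 1 else 0) = 0
      split_ifs with h1 h2
      · exact absurd (h1 ▸ h2 : a = b) hab
      · exact mul_zero _
      · exact zero_mul _
      · exact zero_mul _
    have : ψ.symm (δ a) * ψ.symm (δ b) = 0 := by
      rw [← map_mul, h0, map_zero]
    calc ((ψ.symm (δ a) : ↥R) : H.carrier) * ((ψ.symm (δ b) : ↥R) : H.carrier)
        = ((ψ.symm (δ a) * ψ.symm (δ b) : ↥R) : H.carrier) := rfl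
      _ = ((0 : ↥R) : H.carrier) := by rw [this]
      _ = 0 := rfl
  · -- measure
    intro l
    have h1 : (MeasureAlgebra.St m).mu (ψ (ψ.symm (δ l))) = H.mu ((ψ.symm (δ l) : ↥R) : H.carrier) :=
      hψ _
    rw [ψ.apply_symm_apply] at h1
    have h2 : (MeasureAlgebra.St m).mu (δ l) = 1 / m := by
      show (∑ i, ((δ l i).val : ℝ)) / m = 1 / m
      congr 1
      have : ∀ i, ((δ l i).val : ℝ) = if i = l then 1 else 0 := by
        intro i
        by_cases h : i = l <;> simp [hδ, h, ZMod.val_one]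
      rw [Finset.sum_congr rfl (fun i _ => this i), Finset.sum_ite_eq' Finset.univ l (fun _ => (1:ℝ))]
      simp
    rw [h2] at h1
    exact h1.symm
  · -- sum of atoms is e
    have hee : ∀ x : ↥R, (⟨e, heR⟩ : ↥R) * x = x := fun x => Subtype.ext (he x.1)
    have hid : ∀ y : (MeasureAlgebra.St m).carrier, ψ ⟨e, heR⟩ * y = y := by
      intro y
      calc ψ ⟨e, heR⟩ * y = ψ ⟨e, heR⟩ * ψ (ψ.symm y) := by rw [ψ.apply_symm_apply]
        _ = ψ ((⟨e, heR⟩ : ↥R) * ψ.symm y) := by rw [map_mul]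
        _ = ψ (ψ.symm y) := by rw [hee]
        _ = y := ψ.apply_symm_apply y
    have hone : ψ ⟨e, heR⟩ = fun _ => (1 : ZMod 2) := by
      funext i
      have := congrFun (hid (fun _ => (1 : ZMod 2))) i
      calc ψ ⟨e, heR⟩ i = ψ ⟨e, heR⟩ i * 1 := (mul_one _).symm
        _ = 1 := this
    have hsum : ∑ l, δ l = fun _ => (1 : ZMod 2) := by
      funext i
      refine (Finset.sum_apply (M := fun _ : Fin m => ZMod 2) _ _ _).trans ?_
      show (∑ l, if i = l then (1 : ZMod 2) else 0) = 1
      rw [Finset.sum_ite_eq Finset.univ i (fun _ => (1 : ZMod 2))]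
      simp
    calc ∑ l, ((ψ.symm (δ l) : ↥R) : H.carrier)
        = ((∑ l, ψ.symm (δ l) : ↥R) : H.carrier) := by
          rw [AddSubmonoidClass.coe_finset_sum]
      _ = ((ψ.symm (∑ l, δ l) : ↥R) : H.carrier) := by rw [map_sum]
      _ = ((ψ.symm (ψ ⟨e, heR⟩) : ↥R) : H.carrier) := by rw [hsum, ← hone]
      _ = e := by rw [ψ.symm_apply_apply]
  · -- subset sums
    intro x hx
    set v := ψ ⟨x, hx⟩ with hv
    refine ⟨Finset.univ.filter (fun l => v l = 1), ?_⟩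
    have hzz : ∀ z : ZMod 2, (if z = 1 then (1 : ZMod 2) else 0) = z := by decide
    have hrep : v = ∑ l ∈ Finset.univ.filter (fun l => v l = 1), δ l := by
      funext i
      refine Eq.trans ?_ (Finset.sum_apply (M := fun _ : Fin m => ZMod 2) _ _ _).symm
      show v i = ∑ l ∈ Finset.univ.filter (fun l => v l = 1), if i = l then (1 : ZMod 2) else 0
      rw [Finset.sum_ite_eq (Finset.univ.filter (fun l => v l = 1)) i (fun _ => (1 : ZMod 2))]
      simp only [Finset.mem_filter, Finset.mem_univ, true_and]
      exact (hzz (v i)).symm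
    have h3 : (⟨x, hx⟩ : ↥R) = ∑ l ∈ Finset.univ.filter (fun l => v l = 1), ψ.symm (δ l) := by
      rw [← map_sum, ← hrep, hv, ψ.symm_apply_apply]
    have h4 := congrArg (Subtype.val) h3
    rw [AddSubmonoidClass.coe_finset_sum] at h4
    exact h4

lemma ite_sum {M : Type*} [AddCommMonoid M] (c : Prop) [Decidable c] {ι : Type*}
    (s : Finset ι) (f : ι → M) :
    (if c then ∑ x ∈ s, f x else 0) = ∑ x ∈ s, if c then f x else 0 := by
  split_ifs <;> simp

/-! ### Upgrading scalar equivalence to isomorphism -/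

lemma psi_one {H : MeasureAlgebra} {e : H.carrier} (he : ∀ x, e * x = x)
    {R : NonUnitalSubring H.carrier} (heR : e ∈ R) {m : ℕ}
    (ψ : ↥R ≃+* (MeasureAlgebra.St m).carrier) :
    ψ ⟨e, heR⟩ = fun _ => (1 : ZMod 2) := by
  have hee : ∀ x : ↥R, (⟨e, heR⟩ : ↥R) * x = x := fun x => Subtype.ext (he x.1)
  have hid : ∀ y : (MeasureAlgebra.St m).carrier, ψ ⟨e, heR⟩ * y = y := by
    intro y
    calc ψ ⟨e, heR⟩ * y = ψ ⟨e, heR⟩ * ψ (ψ.symm y) := by rw [ψ.apply_symm_apply]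
      _ = ψ ((⟨e, heR⟩ : ↥R) * ψ.symm y) := by rw [map_mul]
      _ = ψ (ψ.symm y) := by rw [hee]
      _ = y := ψ.apply_symm_apply y
  funext i
  have := congrFun (hid (fun _ => (1 : ZMod 2))) i
  calc ψ ⟨e, heR⟩ i = ψ ⟨e, heR⟩ i * 1 := (mul_one _).symm
    _ = 1 := this

lemma mu_st_one (m : ℕ) (hm : 0 < m) :
    (MeasureAlgebra.St m).mu (fun _ => (1 : ZMod 2)) = 1 := by
  show (∑ _i : Fin m, ((1 : ZMod 2).val : ℝ)) / m = 1
  have h0 : (1 : ZMod 2).val = 1 := rfl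
  have h1 : ((1 : ZMod 2).val : ℝ) = 1 := by rw [h0]; norm_num
  simp only [h1, Finset.sum_const, Finset.card_univ, Fintype.card_fin, nsmul_eq_mul, mul_one]
  exact div_self (Nat.cast_ne_zero.mpr hm.ne' : (m:ℝ) ≠ 0)

/-- Applying local standardness to a finite set, in the unital case, gives honest
standard atoms. -/
lemma standard_cover (H : MeasureAlgebra) (hu : H.Unital) (hls : H.LocallyStandard)
    (e : H.carrier) (he : ∀ x, e * x = x) (t : Finset H.carrier) :
    ∃ (m : ℕ) (g : Fin m → H.carrier), 0 < m ∧
      (∀ a b, a ≠ b → g a * g b = 0) ∧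
      (∀ l, H.mu (g l) = 1 / m) ∧
      (∑ l, g l = e) ∧
      (∀ x ∈ t, ∃ A : Finset (Fin m), x = ∑ l ∈ A, g l) := by
  classical
  have hμe : H.mu e = 1 := by
    obtain ⟨e', he', hμ⟩ := hu
    have : e = e' := by rw [← he e', mul_comm, he' e]
    rw [this]; exact hμ
  obtain ⟨R, m, hm, hsub, hsc⟩ := hls (insert e t)
  have heR : e ∈ R := hsub (Finset.mem_insert_self e t)
  obtain ⟨α, hα, ψ0, hψ0⟩ := hsc
  obtain ⟨ψ, rfl⟩ : ∃ ψ : ↥R ≃+* (MeasureAlgebra.St m).carrier, ψ = ψ0 := ⟨ψ0, rfl⟩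
  have hψ : ∀ a : ↥R, (MeasureAlgebra.St m).mu (ψ a) = α * H.mu (a : H.carrier) := hψ0
  have hα1 : α = 1 := by
    have h1 := hψ ⟨e, heR⟩
    rw [psi_one he heR ψ, mu_st_one m hm] at h1
    simpa [hμe] using h1.symm
  have hiso : (H.restrict R).Isomorphic (MeasureAlgebra.St m) := by
    refine ⟨ψ, fun a => ?_⟩
    have := hψ a
    rw [hα1, one_mul] at this
    exact this
  obtain ⟨g, hgR, horth, hμg, hgsum, hrep⟩ := atoms_of_iso H e he R heR m hiso
  exact ⟨m, g, hm, horth, hμg, hgsum,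
    fun x hx => hrep x (hsub (Finset.mem_insert_of_mem hx))⟩

/-- Transport of a subset-sum representation along a refinement, for any family
in an additive commutative monoid. -/
lemma refine_rep_gen {M : Type*} [AddCommMonoid M] {n : ℕ} {J J' : Type}
    [Fintype J] [Fintype J'] (π : J' → J) (F : Fin n × J → M) (F' : Fin n × J' → M)
    (hrel : ∀ i j, F (i, j) = ∑ j', if π j' = j then F' (i, j') else 0)
    (B : Finset (Fin n × J)) :
    ∑ p ∈ B, F p
      = ∑ p' ∈ Finset.univ.filter (fun p' : Fin n × J' => (p'.1, π p'.2) ∈ B), F' p' := by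
  classical
  rw [Finset.sum_filter]
  have lhs1 : ∑ p ∈ B, F p = ∑ p : Fin n × J, if p ∈ B then F p else 0 := by
    rw [Finset.sum_ite_mem, Finset.univ_inter]
  rw [lhs1, Fintype.sum_prod_type]
  conv_rhs => rw [Fintype.sum_prod_type]
  refine Finset.sum_congr rfl (fun i _ => ?_)
  calc ∑ j, (if (i, j) ∈ B then F (i, j) else 0)
      = ∑ j, ∑ j', (if (i, j) ∈ B then (if π j' = j then F' (i, j') else 0) else 0) := by
        refine Finset.sum_congr rfl (fun j _ => ?_)
        rw [hrel i j, ite_sum]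
    _ = ∑ j', ∑ j, (if π j' = j then (if (i, j) ∈ B then F' (i, j') else 0) else 0) := by
        rw [Finset.sum_comm]
        refine Finset.sum_congr rfl (fun j' _ => Finset.sum_congr rfl (fun j _ => ?_))
        split_ifs <;> rfl
    _ = ∑ j', (if (i, π j') ∈ B then F' (i, j') else 0) := by
        refine Finset.sum_congr rfl (fun j' _ => ?_)
        rw [Finset.sum_ite_eq Finset.univ (π j')
          (fun j => if (i, j) ∈ B then F' (i, j') else 0)]
        simp

/-! ### Levels -/

structure Level (H : MeasureAlgebra) (n : ℕ) (eAt : Fin n → H.carrier) : Type 1 where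
  J : Type
  fin : Fintype J
  ne : Nonempty J
  b : Fin n × J → H.carrier
  orth : ∀ x y, x ≠ y → b x * b y = 0
  mu_b : ∀ x, H.mu (b x) = 1 / (n * Fintype.card J)
  rowsum : ∀ i, ∑ j, b (i, j) = eAt i

attribute [instance] Level.fin Level.ne

namespace Level

variable {H : MeasureAlgebra} {n : ℕ} {eAt : Fin n → H.carrier}

/-- `L'` refines `L` with a parent map independent of the first coordinate. -/
def Ext (L L' : Level H n eAt) : Prop :=
  ∃ π : L'.J → L.J, ∀ i j, L.b (i, j) = ∑ j', if π j' = j then L'.b (i, j') else 0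

def Mem (L : Level H n eAt) (h : H.carrier) : Prop :=
  ∃ B : Finset (Fin n × L.J), h = ∑ p ∈ B, L.b p

lemma b_ne_zero (hn : 0 < n) (L : Level H n eAt) (x : Fin n × L.J) : L.b x ≠ 0 := by
  intro h0
  have := L.mu_b x
  rw [h0, (H.mu_eq_zero_iff 0).mpr rfl] at this
  have hc : (0 : ℝ) < n * Fintype.card L.J := by
    have := Fintype.card_pos (α := L.J)
    positivity
  rw [eq_comm, div_eq_zero_iff] at this
  rcases this with h | h
  · norm_num at h
  · exact absurd h (ne_of_gt hc)

lemma rep_unique (hn : 0 < n) (L : Level H n eAt) {B B' : Finset (Fin n × L.J)}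
    (h : ∑ p ∈ B, L.b p = ∑ p ∈ B', L.b p) : B = B' := by
  classical
  exact sum_ortho_inj H L.b L.orth (L.b_ne_zero hn) h

lemma mu_rep (L : Level H n eAt) (B : Finset (Fin n × L.J)) :
    H.mu (∑ p ∈ B, L.b p) = B.card / (n * Fintype.card L.J) := by
  classical
  rw [mu_sum_ortho H L.b L.orth B]
  rw [Finset.sum_congr rfl (fun x _ => L.mu_b x), Finset.sum_const, nsmul_eq_mul]
  rw [mul_one_div]

lemma ext_refl (L : Level H n eAt) : L.Ext L := by
  classical
  refine ⟨id, fun i j => ?_⟩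
  simp only [id]
  rw [Finset.sum_ite_eq' Finset.univ j (fun j' => L.b (i, j'))]
  simp

lemma ext_trans {L L' L'' : Level H n eAt} (h1 : L.Ext L') (h2 : L'.Ext L'') :
    L.Ext L'' := by
  classical
  obtain ⟨π1, hπ1⟩ := h1
  obtain ⟨π2, hπ2⟩ := h2
  refine ⟨π1 ∘ π2, fun i j => ?_⟩
  rw [hπ1 i j]
  have : ∀ j' : L'.J, (if π1 j' = j then L'.b (i, j') else 0)
      = ∑ j'' : L''.J, if π2 j'' = j' then (if π1 j' = j then L''.b (i, j'') else 0) else 0 := by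
    intro j'
    rw [hπ2 i j', ite_sum]
    apply Finset.sum_congr rfl
    intro j'' _
    split_ifs <;> rfl
  rw [Finset.sum_congr rfl (fun j' _ => this j'), Finset.sum_comm]
  apply Finset.sum_congr rfl
  intro j'' _
  rw [Finset.sum_ite_eq Finset.univ (π2 j'')
    (fun j' => if π1 j' = j then L''.b (i, j'') else 0)]
  simp only [Finset.mem_univ, if_true, Function.comp_apply]

/-- Transport of an explicit representation along a refinement. -/
lemma refine_rep {L L' : Level H n eAt} {π : L'.J → L.J}
    (hπ : ∀ i j, L.b (i, j) = ∑ j', if π j' = j then L'.b (i, j') else 0)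
    (B : Finset (Fin n × L.J)) :
    ∑ p ∈ B, L.b p
      = ∑ p' ∈ Finset.univ.filter (fun p' : Fin n × L'.J => (p'.1, π p'.2) ∈ B), L'.b p' :=
  refine_rep_gen π L.b L'.b hπ B

end Level

/-! ### The refinement step -/

lemma step (H : MeasureAlgebra) (hu : H.Unital) (hls : H.LocallyStandard)
    (e : H.carrier) (he : ∀ x, e * x = x)
    {n : ℕ} (hn : 0 < n) {eAt : Fin n → H.carrier} (hsum : ∑ i, eAt i = e)
    (L : Level H n eAt) (h : H.carrier) :
    ∃ L' : Level H n eAt, L.Ext L' ∧ L'.Mem h := by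
  classical
  obtain ⟨m, g, hm, gorth, gmu, gsum, grep⟩ :=
    standard_cover H hu hls e he (insert h (Finset.image L.b Finset.univ))
  have hmr : (0:ℝ) < m := by exact_mod_cast hm
  have gnz : ∀ l, g l ≠ 0 := by
    intro l h0
    have h1 := gmu l
    rw [h0, (H.mu_eq_zero_iff 0).mpr rfl] at h1
    have h2 : (0:ℝ) < 1 / m := by positivity
    rw [← h1] at h2
    exact lt_irrefl 0 h2
  have hbx : ∀ x, ∃ A : Finset (Fin m), L.b x = ∑ l ∈ A, g l := fun x =>
    grep _ (Finset.mem_insert_of_mem (Finset.mem_image_of_mem L.b (Finset.mem_univ x)))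
  choose A hA using hbx
  obtain ⟨Ah, hAh⟩ := grep h (Finset.mem_insert_self _ _)
  -- disjointness of the blocks
  have hdisj : ∀ x y, x ≠ y → A x ∩ A y = ∅ := by
    intro x y hxy
    have h0 : (0 : H.carrier) = ∑ l ∈ A x ∩ A y, g l := by
      rw [← sum_mul_sum_ortho H g gorth, ← hA x, ← hA y]
      exact (L.orth x y hxy).symm
    by_contra hne
    obtain ⟨l0, hl0⟩ := Finset.nonempty_iff_ne_empty.mpr hne
    have hmu0 := congrArg H.mu h0
    rw [(H.mu_eq_zero_iff 0).mpr rfl, mu_sum_ortho H g gorth] at hmu0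
    have hpos : 0 < ∑ l ∈ A x ∩ A y, H.mu (g l) :=
      Finset.sum_pos (fun l _ => mu_pos H _ (gnz l)) ⟨l0, hl0⟩
    linarith
  set q := n * Fintype.card L.J with hq
  have hq0 : 0 < q := Nat.mul_pos hn Fintype.card_pos
  have hqr : (0:ℝ) < q := by exact_mod_cast hq0
  -- cardinality of blocks
  have hcard : ∀ x, (A x).card * q = m := by
    intro x
    have h1 : H.mu (L.b x) = (A x).card / m := by
      rw [hA x, mu_sum_ortho H g gorth,
        Finset.sum_congr rfl (fun l _ => gmu l), Finset.sum_const, nsmul_eq_mul, mul_one_div]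
    have h2 := L.mu_b x
    rw [h1] at h2
    have hcr : (0:ℝ) < (n : ℝ) * (Fintype.card L.J : ℝ) := by
      have : (0:ℝ) < (n:ℝ) := by exact_mod_cast hn
      have h4 : (0:ℝ) < (Fintype.card L.J : ℝ) := by exact_mod_cast Fintype.card_pos
      positivity
    have h3 : ((A x).card : ℝ) * ((n : ℝ) * (Fintype.card L.J : ℝ)) = 1 * m :=
      (div_eq_div_iff (ne_of_gt hmr) (ne_of_gt hcr)).mp h2
    rw [one_mul] at h3
    have h4 : ((A x).card : ℝ) * ((n * Fintype.card L.J : ℕ) : ℝ) = m := by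
      push_cast; exact h3
    exact_mod_cast h4
  set s := m / q with hsdef
  have hs : ∀ x, (A x).card = s := by
    intro x
    rw [hsdef]
    exact (Nat.div_eq_of_eq_mul_left hq0 (hcard x).symm).symm
  have x0 : Fin n × L.J := ⟨⟨0, hn⟩, Classical.arbitrary L.J⟩
  have hqm : s * q = m := by rw [← hs x0]; exact hcard x0
  have hs0 : 0 < s := by
    rcases Nat.eq_zero_or_pos s with h0 | h0
    · rw [h0, zero_mul] at hqm; omega
    · exact h0
  -- enumerations of the blocks
  have ε : ∀ x : Fin n × L.J, Fin s ≃ {l // l ∈ A x} := fun x =>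
    (finCongr (hs x).symm).trans (A x).equivFin.symm
  set E : Fin n × (L.J × Fin s) → Fin m := fun p => ((ε (p.1, p.2.1)) p.2.2 : {l // l ∈ A (p.1, p.2.1)}).1 with hE
  have hE_mem : ∀ p, E p ∈ A (p.1, p.2.1) := fun p => ((ε (p.1, p.2.1)) p.2.2).2
  have hEinj : Function.Injective E := by
    rintro ⟨i, j, t⟩ ⟨i', j', t'⟩ hEe
    have hxy : (i, j) = (i', j') := by
      by_contra hne
      have hd := hdisj (i, j) (i', j') hne
      have h1 : E (i, j, t) ∈ A (i, j) ∩ A (i', j') := by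
        refine Finset.mem_inter.mpr ⟨hE_mem (i, j, t), ?_⟩
        rw [hEe]; exact hE_mem (i', j', t')
      rw [hd] at h1
      exact absurd h1 (Finset.notMem_empty _)
    have hi : i = i' := congrArg Prod.fst hxy
    have hj : j = j' := congrArg Prod.snd hxy
    subst hi; subst hj
    have ht : (ε (i, j)) t = (ε (i, j)) t' := Subtype.ext hEe
    have ht' : t = t' := (ε (i, j)).injective ht
    subst ht'; rfl
  have hcardEq : Fintype.card (Fin n × (L.J × Fin s)) = m := by
    simp only [Fintype.card_prod, Fintype.card_fin]
    calc n * (Fintype.card L.J * s) = s * q := by rw [hq]; ring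
      _ = m := hqm
  have hEbij : Function.Bijective E :=
    (Fintype.bijective_iff_injective_and_card E).mpr
      ⟨hEinj, hcardEq.trans (Fintype.card_fin m).symm⟩
  set EE := Equiv.ofBijective E hEbij with hEE
  -- the parent identity
  have hpar : ∀ i j, L.b (i, j) = ∑ t : Fin s, g (E (i, (j, t))) := by
    intro i j
    rw [hA (i, j), ← Finset.sum_coe_sort (A (i, j)) g]
    exact (Equiv.sum_comp (ε (i, j)) (fun l => g l.1)).symm
  -- measure of the new atoms
  have hmu' : ∀ p : Fin n × (L.J × Fin s),
      H.mu (g (E p)) = 1 / (n * Fintype.card (L.J × Fin s)) := by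
    intro p
    rw [gmu]
    congr 1
    rw [Fintype.card_prod, Fintype.card_fin]
    exact_mod_cast (by rw [← hqm, hq]; ring : (n * (Fintype.card L.J * s) : ℕ) = m).symm
  refine ⟨{ J := L.J × Fin s, fin := inferInstance,
            ne := ⟨⟨Classical.arbitrary L.J, ⟨0, hs0⟩⟩⟩,
            b := fun p => g (E p),
            orth := fun x y hxy => gorth _ _ (fun hEe => hxy (hEinj hEe)),
            mu_b := hmu',
            rowsum := ?_ }, ?_, ?_⟩
  · -- rowsum
    intro i
    show ∑ jt : L.J × Fin s, g (E (i, jt)) = eAt i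
    rw [Fintype.sum_prod_type]
    rw [Finset.sum_congr rfl (fun j _ => (hpar i j).symm)]
    exact L.rowsum i
  · -- Ext
    refine ⟨fun jt => jt.1, fun i j => ?_⟩
    show L.b (i, j) = ∑ jt : L.J × Fin s, if jt.1 = j then g (E (i, jt)) else 0
    rw [Fintype.sum_prod_type]
    have h1 : ∀ j' : L.J, (∑ t : Fin s, if j' = j then g (E (i, (j', t))) else 0)
        = if j' = j then (∑ t : Fin s, g (E (i, (j', t)))) else 0 := fun j' =>
      (ite_sum _ _ _).symm
    rw [Finset.sum_congr rfl (fun j' _ => h1 j')]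
    rw [Finset.sum_ite_eq' Finset.univ j (fun j' => ∑ t : Fin s, g (E (i, (j', t))))]
    simp only [Finset.mem_univ, if_true]
    exact hpar i j
  · -- Mem
    refine ⟨Ah.map EE.symm.toEmbedding, ?_⟩
    show h = ∑ p ∈ Ah.map EE.symm.toEmbedding, g (E p)
    rw [Finset.sum_map]
    rw [hAh]
    refine Finset.sum_congr rfl (fun l hl => ?_)
    have h5 : E (EE.symm.toEmbedding l) = l := EE.apply_symm_apply l
    rw [h5]


/-! ### The chain of levels -/

lemma chain (H : MeasureAlgebra) (hc : Countable H.carrier) (hu : H.Unital)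
    (hls : H.LocallyStandard) (e : H.carrier) (he : ∀ x, e * x = x)
    {n : ℕ} (hn : 0 < n) {eAt : Fin n → H.carrier} (hsum : ∑ i, eAt i = e)
    (L0 : Level H n eAt) :
    ∃ lvl : ℕ → Level H n eAt, lvl 0 = L0 ∧
      (∀ k l, k ≤ l → (lvl k).Ext (lvl l)) ∧
      (∀ h : H.carrier, ∃ k, (lvl k).Mem h) := by
  classical
  have hne : Nonempty H.carrier := ⟨0⟩
  obtain ⟨f, hf⟩ := exists_surjective_nat H.carrier
  refine ⟨fun k => Nat.rec L0 (fun k L => (step H hu hls e he hn hsum L (f k)).choose) k,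
    rfl, ?_, ?_⟩
  · intro k l hkl
    induction l, hkl using Nat.le_induction with
    | base => exact Level.ext_refl _
    | succ l hkl ih =>
      exact Level.ext_trans ih (step H hu hls e he hn hsum _ (f l)).choose_spec.1
  · intro h
    obtain ⟨k, rfl⟩ := hf h
    exact ⟨k + 1, (step H hu hls e he hn hsum _ (f k)).choose_spec.2⟩


/-! ### Columns and the complementary subalgebra -/

def col {H : MeasureAlgebra} {n : ℕ} {eAt : Fin n → H.carrier}
    (L : Level H n eAt) (j : L.J) : H.carrier := ∑ i, L.b (i, j)

lemma cyl_rep {H : MeasureAlgebra} {n : ℕ} {eAt : Fin n → H.carrier}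
    (L : Level H n eAt) (Js : Finset L.J) :
    ∑ j ∈ Js, col L j = ∑ p ∈ Finset.univ ×ˢ Js, L.b p := by
  rw [Finset.sum_product_right]
  rfl

lemma row_rep {H : MeasureAlgebra} {n : ℕ} {eAt : Fin n → H.carrier}
    (L : Level H n eAt) (I : Finset (Fin n)) :
    ∑ i ∈ I, eAt i = ∑ p ∈ I ×ˢ Finset.univ, L.b p := by
  rw [Finset.sum_product]
  exact Finset.sum_congr rfl (fun i _ => (L.rowsum i).symm)

lemma atom_factor {H : MeasureAlgebra} {n : ℕ} {eAt : Fin n → H.carrier}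
    (L : Level H n eAt) (i : Fin n) (j : L.J) :
    eAt i * col L j = L.b (i, j) := by
  classical
  have h1 : eAt i = ∑ p ∈ ({i} : Finset (Fin n)) ×ˢ Finset.univ, L.b p := by
    rw [← row_rep L {i}, Finset.sum_singleton]
  have h2 : col L j = ∑ p ∈ Finset.univ ×ˢ ({j} : Finset L.J), L.b p := by
    rw [← cyl_rep L {j}, Finset.sum_singleton]
  rw [h1, h2, sum_mul_sum_ortho H L.b L.orth]
  have h3 : (({i} : Finset (Fin n)) ×ˢ (Finset.univ : Finset L.J)) ∩
      ((Finset.univ : Finset (Fin n)) ×ˢ ({j} : Finset L.J)) = {(i, j)} := by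
    ext p
    simp only [Finset.mem_inter, Finset.mem_product, Finset.mem_singleton, Finset.mem_univ,
      and_true, true_and]
    constructor
    · rintro ⟨h1, h2⟩; exact Prod.ext h1 h2
    · rintro rfl; exact ⟨rfl, rfl⟩
  rw [h3, Finset.sum_singleton]

lemma col_of_b {H : MeasureAlgebra} {n : ℕ} {eAt : Fin n → H.carrier}
    {L L' : Level H n eAt} {π : L'.J → L.J}
    (hπ : ∀ i j, L.b (i, j) = ∑ j', if π j' = j then L'.b (i, j') else 0) (j : L.J) :
    col L j = ∑ j', if π j' = j then col L' j' else 0 := by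
  classical
  show ∑ i, L.b (i, j) = _
  rw [Finset.sum_congr rfl (fun i _ => hπ i j), Finset.sum_comm]
  refine Finset.sum_congr rfl (fun j' _ => ?_)
  rw [← ite_sum]
  rfl

lemma cyl_to_level {H : MeasureAlgebra} {n : ℕ} {eAt : Fin n → H.carrier}
    {L L' : Level H n eAt} {π : L'.J → L.J}
    (hπ : ∀ i j, L.b (i, j) = ∑ j', if π j' = j then L'.b (i, j') else 0)
    (Js : Finset L.J) :
    ∑ j ∈ Js, col L j = ∑ j' ∈ Finset.univ.filter (fun j' => π j' ∈ Js), col L' j' := by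
  classical
  rw [cyl_rep, cyl_rep, refine_rep_gen π L.b L'.b hπ]
  refine Finset.sum_congr ?_ (fun _ _ => rfl)
  ext p
  simp [Finset.mem_product, Finset.mem_filter]

/-- The complementary subalgebra: subset sums of columns at any level. -/
def Tsub (H : MeasureAlgebra) {n : ℕ} {eAt : Fin n → H.carrier}
    (lvl : ℕ → Level H n eAt) (hext : ∀ k l, k ≤ l → (lvl k).Ext (lvl l)) :
    NonUnitalSubring H.carrier where
  carrier := {x | ∃ (k : ℕ) (Js : Finset (lvl k).J), x = ∑ j ∈ Js, col (lvl k) j}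
  zero_mem' := ⟨0, ∅, by simp⟩
  add_mem' := by
    classical
    rintro x y ⟨k1, J1, rfl⟩ ⟨k2, J2, rfl⟩
    obtain ⟨π1, hπ1⟩ := hext k1 (max k1 k2) (le_max_left _ _)
    obtain ⟨π2, hπ2⟩ := hext k2 (max k1 k2) (le_max_right _ _)
    rw [cyl_to_level hπ1 J1, cyl_to_level hπ2 J2,
      sum_add_sum_symmDiff _ (fun j => char2 H _)]
    exact ⟨max k1 k2, _, rfl⟩
  neg_mem' := by
    rintro x hx
    have : -x = x := neg_eq_of_add_eq_zero_left (char2 H x)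
    rwa [this]
  mul_mem' := by
    classical
    rintro x y ⟨k1, J1, rfl⟩ ⟨k2, J2, rfl⟩
    obtain ⟨π1, hπ1⟩ := hext k1 (max k1 k2) (le_max_left _ _)
    obtain ⟨π2, hπ2⟩ := hext k2 (max k1 k2) (le_max_right _ _)
    rw [cyl_to_level hπ1 J1, cyl_to_level hπ2 J2, cyl_rep, cyl_rep,
      sum_mul_sum_ortho H _ (lvl (max k1 k2)).orth]
    refine ⟨max k1 k2, (Finset.univ.filter (fun j' => π1 j' ∈ J1)) ∩
      (Finset.univ.filter (fun j' => π2 j' ∈ J2)), ?_⟩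
    rw [cyl_rep]
    refine Finset.sum_congr ?_ (fun _ _ => rfl)
    ext p
    simp [Finset.mem_product, Finset.mem_filter, and_assoc, and_left_comm]


/-! ### Extending a permutation of the atoms to an automorphism -/

lemma image_filter_comm {n : ℕ} (τ : Equiv.Perm (Fin n)) {J J' : Type}
    [Fintype J'] [DecidableEq J] [DecidableEq J'] (π : J' → J) (B : Finset (Fin n × J)) :
    (Finset.univ.filter (fun p : Fin n × J' => (p.1, π p.2) ∈ B)).image
        (fun p : Fin n × J' => (τ p.1, p.2))
      = Finset.univ.filter (fun p : Fin n × J' =>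
          (p.1, π p.2) ∈ B.image (fun p : Fin n × J => (τ p.1, p.2))) := by
  classical
  ext p
  simp only [Finset.mem_image, Finset.mem_filter, Finset.mem_univ, true_and]
  constructor
  · rintro ⟨q, hq, rfl⟩
    exact ⟨(q.1, π q.2), hq, rfl⟩
  · rintro ⟨q, hq, hqe⟩
    have h1 : τ q.1 = p.1 := congrArg Prod.fst hqe
    have h2 : q.2 = π p.2 := congrArg Prod.snd hqe
    refine ⟨(q.1, p.2), ?_, ?_⟩
    · show (q.1, π p.2) ∈ B
      rw [← h2]
      exact hq
    · show (τ q.1, p.2) = p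
      rw [h1]

section Phi

variable {H : MeasureAlgebra} {n : ℕ} {eAt : Fin n → H.carrier}

/-- The extension of the atom permutation `τ` to `H`, defined by choice of
representations. -/
def PhiFun (lvl : ℕ → Level H n eAt)
    (hcover : ∀ h : H.carrier, ∃ k, (lvl k).Mem h) (τ : Equiv.Perm (Fin n)) :
    H.carrier → H.carrier := fun h =>
  ∑ p ∈ (hcover h).choose_spec.choose.image
      (fun p : Fin n × (lvl (hcover h).choose).J => (τ p.1, p.2)),
    (lvl (hcover h).choose).b p

variable (hn : 0 < n) (lvl : ℕ → Level H n eAt)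
  (hext : ∀ k l, k ≤ l → (lvl k).Ext (lvl l))
  (hcover : ∀ h : H.carrier, ∃ k, (lvl k).Mem h) (τ : Equiv.Perm (Fin n))

include hn hext in
lemma PhiFun_spec (h : H.carrier) (k : ℕ) (B : Finset (Fin n × (lvl k).J))
    (hB : h = ∑ p ∈ B, (lvl k).b p) :
    PhiFun lvl hcover τ h
      = ∑ p ∈ B.image (fun p : Fin n × (lvl k).J => (τ p.1, p.2)), (lvl k).b p := by
  classical
  set k0 := (hcover h).choose with hk0
  set B0 := (hcover h).choose_spec.choose with hB0def
  have hB0 : h = ∑ p ∈ B0, (lvl k0).b p := (hcover h).choose_spec.choose_spec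
  set l := max k k0 with hl
  obtain ⟨π, hπ⟩ := hext k l (le_max_left _ _)
  obtain ⟨π0, hπ0⟩ := hext k0 l (le_max_right _ _)
  have h1 : h = ∑ p ∈ Finset.univ.filter
      (fun p : Fin n × (lvl l).J => (p.1, π p.2) ∈ B), (lvl l).b p :=
    hB.trans (Level.refine_rep hπ B)
  have h2 : h = ∑ p ∈ Finset.univ.filter
      (fun p : Fin n × (lvl l).J => (p.1, π0 p.2) ∈ B0), (lvl l).b p :=
    hB0.trans (Level.refine_rep hπ0 B0)
  have hBB := Level.rep_unique hn (lvl l) (h1.symm.trans h2)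
  calc PhiFun lvl hcover τ h
      = ∑ p ∈ B0.image (fun p : Fin n × (lvl k0).J => (τ p.1, p.2)), (lvl k0).b p := rfl
    _ = ∑ p ∈ Finset.univ.filter (fun p : Fin n × (lvl l).J =>
          (p.1, π0 p.2) ∈ B0.image (fun p : Fin n × (lvl k0).J => (τ p.1, p.2))),
          (lvl l).b p := Level.refine_rep hπ0 _
    _ = ∑ p ∈ (Finset.univ.filter (fun p : Fin n × (lvl l).J => (p.1, π0 p.2) ∈ B0)).image
          (fun p : Fin n × (lvl l).J => (τ p.1, p.2)), (lvl l).b p := by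
          rw [image_filter_comm]
    _ = ∑ p ∈ (Finset.univ.filter (fun p : Fin n × (lvl l).J => (p.1, π p.2) ∈ B)).image
          (fun p : Fin n × (lvl l).J => (τ p.1, p.2)), (lvl l).b p := by rw [hBB]
    _ = ∑ p ∈ Finset.univ.filter (fun p : Fin n × (lvl l).J =>
          (p.1, π p.2) ∈ B.image (fun p : Fin n × (lvl k).J => (τ p.1, p.2))),
          (lvl l).b p := by rw [image_filter_comm]
    _ = ∑ p ∈ B.image (fun p : Fin n × (lvl k).J => (τ p.1, p.2)), (lvl k).b p :=
          (Level.refine_rep hπ _).symm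

lemma pairmap_inj (J : Type) : Function.Injective
    (fun p : Fin n × J => (τ p.1, p.2)) := by
  rintro ⟨a, b⟩ ⟨a', b'⟩ hp
  have h1 := congrArg Prod.fst hp
  have h2 := congrArg Prod.snd hp
  simp only at h1 h2
  rw [Prod.mk.injEq]
  exact ⟨τ.injective h1, h2⟩

include hn hext hcover in
/-- Two representations of `x` and `y` at a common level. -/
lemma common_rep (x y : H.carrier) :
    ∃ (l : ℕ) (Bx By : Finset (Fin n × (lvl l).J)),
      x = ∑ p ∈ Bx, (lvl l).b p ∧ y = ∑ p ∈ By, (lvl l).b p := by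
  classical
  obtain ⟨k1, B1, hB1⟩ := hcover x
  obtain ⟨k2, B2, hB2⟩ := hcover y
  obtain ⟨π1, hπ1⟩ := hext k1 (max k1 k2) (le_max_left _ _)
  obtain ⟨π2, hπ2⟩ := hext k2 (max k1 k2) (le_max_right _ _)
  exact ⟨max k1 k2, _, _, hB1.trans (Level.refine_rep hπ1 B1),
    hB2.trans (Level.refine_rep hπ2 B2)⟩

include hn hext in
lemma PhiFun_add (x y : H.carrier) :
    PhiFun lvl hcover τ (x + y) = PhiFun lvl hcover τ x + PhiFun lvl hcover τ y := by
  classical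
  obtain ⟨l, Bx, By, hBx, hBy⟩ := common_rep hn lvl hext hcover x y
  have hxy : x + y = ∑ p ∈ symmDiff Bx By, (lvl l).b p := by
    rw [hBx, hBy, sum_add_sum_symmDiff _ (fun p => char2 H _)]
  rw [PhiFun_spec hn lvl hext hcover τ _ l _ hxy,
    PhiFun_spec hn lvl hext hcover τ _ l _ hBx,
    PhiFun_spec hn lvl hext hcover τ _ l _ hBy,
    sum_add_sum_symmDiff _ (fun p => char2 H _)]
  congr 1
  exact Finset.image_symmDiff Bx By (pairmap_inj τ _)

include hn hext in
lemma PhiFun_mul (x y : H.carrier) :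
    PhiFun lvl hcover τ (x * y) = PhiFun lvl hcover τ x * PhiFun lvl hcover τ y := by
  classical
  obtain ⟨l, Bx, By, hBx, hBy⟩ := common_rep hn lvl hext hcover x y
  have hxy : x * y = ∑ p ∈ Bx ∩ By, (lvl l).b p := by
    rw [hBx, hBy, sum_mul_sum_ortho H _ (lvl l).orth]
  rw [PhiFun_spec hn lvl hext hcover τ _ l _ hxy,
    PhiFun_spec hn lvl hext hcover τ _ l _ hBx,
    PhiFun_spec hn lvl hext hcover τ _ l _ hBy,
    sum_mul_sum_ortho H _ (lvl l).orth]
  congr 1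
  exact Finset.image_inter Bx By (pairmap_inj τ _)

include hn hext in
lemma PhiFun_mu (x : H.carrier) : H.mu (PhiFun lvl hcover τ x) = H.mu x := by
  classical
  obtain ⟨k, B, hB⟩ := hcover x
  rw [PhiFun_spec hn lvl hext hcover τ _ k _ hB, hB, Level.mu_rep, Level.mu_rep,
    Finset.card_image_of_injective _ (pairmap_inj τ _)]

include hn hext in
lemma PhiFun_leftinv (x : H.carrier) :
    PhiFun lvl hcover τ.symm (PhiFun lvl hcover τ x) = x := by
  classical
  obtain ⟨k, B, hB⟩ := hcover x
  rw [PhiFun_spec hn lvl hext hcover τ _ k _ hB,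
    PhiFun_spec hn lvl hext hcover τ.symm _ k _ rfl, Finset.image_image]
  have himg : B.image ((fun p : Fin n × (lvl k).J => (τ.symm p.1, p.2)) ∘
      (fun p : Fin n × (lvl k).J => (τ p.1, p.2))) = B := by
    have hfun : ((fun p : Fin n × (lvl k).J => (τ.symm p.1, p.2)) ∘
        (fun p : Fin n × (lvl k).J => (τ p.1, p.2))) = id := by
      funext p
      simp [Function.comp, Equiv.symm_apply_apply]
    rw [hfun, Finset.image_id]
  rw [himg, ← hB]

end Phi

end Lemma7



/-- **Lemma 7(1).** Let `(H, μ)` be a countable unital locally standard measure algebra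
and `Stₙ ≅ S ⊆ H` a standard measure subalgebra containing the identity of `H`. Then
every automorphism of `S` extends to an automorphism of `H`; moreover, `S` is a tensor
factor of `H`: there is a measure subalgebra `T ⊆ H` with `S ⊗ T = H`. -/
theorem standard_subalgebra_automorphism_extends_and_tensor_factor
    (H : MeasureAlgebra) (hc : Countable H.carrier) (hu : H.Unital)
    (hls : H.LocallyStandard) (n : ℕ) (hn : 0 < n)
    (S : NonUnitalSubring H.carrier) (e : H.carrier)
    (he : ∀ x, e * x = x) (heS : e ∈ S)
    (hiso : (H.restrict S).Isomorphic (MeasureAlgebra.St n)) :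
    (∀ φ : ↥S ≃+* ↥S, (∀ x : ↥S, H.mu ↑(φ x) = H.mu ↑x) →
      ∃ Φ : H.carrier ≃+* H.carrier, (∀ a, H.mu (Φ a) = H.mu a) ∧
        ∀ x : ↥S, Φ ↑x = ↑(φ x)) ∧
    (∃ T : NonUnitalSubring H.carrier, H.IsTensorFactorization S T) := by
  classical
  obtain ⟨eAt, heAtS, eorth, emu, esum, erep⟩ := Lemma7.atoms_of_iso H e he S heS n hiso
  have hnr : (0:ℝ) < n := by exact_mod_cast hn
  have enz : ∀ i, eAt i ≠ 0 := by
    intro i h0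
    have h1 := emu i
    rw [h0, (H.mu_eq_zero_iff 0).mpr rfl] at h1
    have h2 : (0:ℝ) < 1/n := by positivity
    rw [← h1] at h2
    exact lt_irrefl 0 h2
  have einj : Function.Injective eAt := by
    intro a b hab
    by_contra hne
    have h1 := eorth a b hne
    rw [hab, H.idem] at h1
    exact enz b h1
  -- base level
  have L0 : Lemma7.Level H n eAt :=
    { J := Fin 1, fin := inferInstance, ne := ⟨0⟩,
      b := fun p => eAt p.1,
      orth := fun x y hxy => eorth x.1 y.1
        (fun h1 => hxy (Prod.ext h1 (Subsingleton.elim _ _))),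
      mu_b := fun x => by rw [emu]; simp,
      rowsum := fun i => by simp }
  obtain ⟨lvl, hlvl0, hext, hcover⟩ := Lemma7.chain H hc hu hls e he hn esum L0
  have eS' : Fin n → ↥S := fun i => ⟨eAt i, heAtS i⟩
  constructor
  · -- Part 1: automorphism extension
    intro φ hφ
    have hσ : ∀ i : Fin n, ∃ a : Fin n,
        ((φ ⟨eAt i, heAtS i⟩ : ↥S) : H.carrier) = eAt a := by
      intro i
      obtain ⟨I, hI⟩ := erep _ (φ ⟨eAt i, heAtS i⟩).2
      have hmuI := hφ ⟨eAt i, heAtS i⟩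
      rw [hI] at hmuI
      rw [Lemma7.mu_sum_ortho H eAt eorth] at hmuI
      rw [Finset.sum_congr rfl (fun a _ => emu a), Finset.sum_const, nsmul_eq_mul,
        mul_one_div] at hmuI
      have hmuI2 : H.mu ((⟨eAt i, heAtS i⟩ : ↥S) : H.carrier) = 1/n := emu i
      rw [hmuI2] at hmuI
      have hcard : (I.card : ℝ) = 1 := by
        field_simp at hmuI
        exact_mod_cast hmuI
      have hcard2 : I.card = 1 := by exact_mod_cast hcard
      obtain ⟨a, ha⟩ := Finset.card_eq_one.mp hcard2
      refine ⟨a, ?_⟩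
      rw [hI, ha, Finset.sum_singleton]
    choose σf hσf using hσ
    have hσinj : Function.Injective σf := by
      intro a b hab
      have h1 : ((φ ⟨eAt a, heAtS a⟩ : ↥S) : H.carrier)
          = ((φ ⟨eAt b, heAtS b⟩ : ↥S) : H.carrier) := by
        rw [hσf a, hσf b, hab]
      have h3 := φ.injective (Subtype.ext h1)
      exact einj (congrArg Subtype.val h3)
    set σ : Equiv.Perm (Fin n) :=
      Equiv.ofBijective σf (Finite.injective_iff_bijective.mp hσinj) with hσdef
    have hσap : ∀ i, σ i = σf i := fun i => rfl
    refine ⟨{ toFun := Lemma7.PhiFun lvl hcover σ,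
              invFun := Lemma7.PhiFun lvl hcover σ.symm,
              left_inv := fun x => Lemma7.PhiFun_leftinv hn lvl hext hcover σ x,
              right_inv := fun x => by
                have := Lemma7.PhiFun_leftinv hn lvl hext hcover σ.symm x
                rwa [Equiv.symm_symm] at this,
              map_mul' := Lemma7.PhiFun_mul hn lvl hext hcover σ,
              map_add' := Lemma7.PhiFun_add hn lvl hext hcover σ },
      fun a => Lemma7.PhiFun_mu hn lvl hext hcover σ a, ?_⟩
    intro x
    obtain ⟨I, hI⟩ := erep x.1 x.2
    have hx0 : (x : H.carrier) = ∑ p ∈ I ×ˢ Finset.univ, (lvl 0).b p :=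
      hI.trans (Lemma7.row_rep (lvl 0) I)
    show Lemma7.PhiFun lvl hcover σ ↑x = ↑(φ x)
    rw [Lemma7.PhiFun_spec hn lvl hext hcover σ _ 0 _ hx0]
    have himg : (I ×ˢ (Finset.univ : Finset (lvl 0).J)).image
        (fun p : Fin n × (lvl 0).J => (σ p.1, p.2))
        = (I.image (fun a => σ a)) ×ˢ Finset.univ := by
      ext p
      constructor
      · intro hp
        obtain ⟨q, hq, rfl⟩ := Finset.mem_image.mp hp
        have hq1 := (Finset.mem_product.mp hq).1
        exact Finset.mem_product.mpr ⟨Finset.mem_image_of_mem _ hq1, Finset.mem_univ _⟩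
      · intro hp
        obtain ⟨a, ha, hap⟩ := Finset.mem_image.mp (Finset.mem_product.mp hp).1
        refine Finset.mem_image.mpr ⟨(a, p.2),
          Finset.mem_product.mpr ⟨ha, Finset.mem_univ _⟩, ?_⟩
        show (σ a, p.2) = p
        rw [hap]
    rw [himg, ← Lemma7.row_rep (lvl 0) (I.image (fun a => σ a))]
    rw [Finset.sum_image (fun a _ b _ hab => σ.injective hab)]
    have hterm : ∀ i ∈ I, eAt (σ i) = ((φ ⟨eAt i, heAtS i⟩ : ↥S) : H.carrier) := by
      intro i _
      rw [hσap i, ← hσf i]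
    rw [Finset.sum_congr rfl hterm, ← AddSubmonoidClass.coe_finset_sum, ← map_sum]
    have hxrep : x = ∑ i ∈ I, (⟨eAt i, heAtS i⟩ : ↥S) := by
      apply Subtype.ext
      rw [AddSubmonoidClass.coe_finset_sum]
      exact hI
    rw [← hxrep]
  · -- Part 2: tensor factorization
    refine ⟨Lemma7.Tsub H lvl hext, ?_, ?_⟩
    · -- multiplicativity of the measure
      intro s hs t ht
      obtain ⟨I, hI⟩ := erep s hs
      obtain ⟨k, Js, hJs⟩ := ht
      have hcJ : (0:ℝ) < Fintype.card (lvl k).J := by exact_mod_cast Fintype.card_pos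
      have hs2 : s = ∑ p ∈ I ×ˢ Finset.univ, (lvl k).b p :=
        hI.trans (Lemma7.row_rep (lvl k) I)
      have ht2 : t = ∑ p ∈ Finset.univ ×ˢ Js, (lvl k).b p :=
        hJs.trans (Lemma7.cyl_rep (lvl k) Js)
      have hst : s * t = ∑ p ∈ I ×ˢ Js, (lvl k).b p := by
        rw [hs2, ht2, Lemma7.sum_mul_sum_ortho H _ (lvl k).orth]
        congr 1
        ext p
        simp [Finset.mem_product, Finset.mem_inter, and_assoc, and_left_comm]
      have hmus : H.mu s = I.card / n := by
        rw [hI, Lemma7.mu_sum_ortho H eAt eorth,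
          Finset.sum_congr rfl (fun a _ => emu a), Finset.sum_const, nsmul_eq_mul,
          mul_one_div]
      have hmut : H.mu t = (n * Js.card : ℕ) / ((n : ℝ) * Fintype.card (lvl k).J) := by
        have hcardt : ((Finset.univ : Finset (Fin n)) ×ˢ Js).card = n * Js.card := by
          rw [Finset.card_product, Finset.card_univ, Fintype.card_fin]
        rw [ht2, Lemma7.Level.mu_rep, hcardt]
      have hmust : H.mu (s * t)
          = (I.card * Js.card : ℕ) / ((n : ℝ) * Fintype.card (lvl k).J) := by
        have hcardst : (I ×ˢ Js).card = I.card * Js.card := Finset.card_product _ _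
        rw [hst, Lemma7.Level.mu_rep, hcardst]
      rw [hmus, hmut, hmust]
      push_cast
      field_simp
    · -- bijectivity of the multiplication map
      have cT : ∀ (k : ℕ) (j : (lvl k).J), Lemma7.col (lvl k) j ∈ Lemma7.Tsub H lvl hext :=
        fun k j => ⟨k, {j}, (Finset.sum_singleton _ _).symm⟩
      set T := Lemma7.Tsub H lvl hext with hT
      have heval : ∀ (k : ℕ) (p : Fin n × (lvl k).J),
          H.mulTensor S T ((⟨eAt p.1, heAtS p.1⟩ : ↥S) ⊗ₜ[ℤ]
            (⟨Lemma7.col (lvl k) p.2, cT k p.2⟩ : ↥T)) = (lvl k).b p := by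
        intro k p
        show eAt p.1 * Lemma7.col (lvl k) p.2 = (lvl k).b p
        exact Lemma7.atom_factor (lvl k) p.1 p.2
      -- lifting tensor representations along levels
      have tlift : ∀ (k l : ℕ), k ≤ l → ∀ K : Finset (Fin n × (lvl k).J),
          ∃ K' : Finset (Fin n × (lvl l).J),
            ∑ p ∈ K, ((⟨eAt p.1, heAtS p.1⟩ : ↥S) ⊗ₜ[ℤ]
                (⟨Lemma7.col (lvl k) p.2, cT k p.2⟩ : ↥T))
              = ∑ p ∈ K', ((⟨eAt p.1, heAtS p.1⟩ : ↥S) ⊗ₜ[ℤ]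
                (⟨Lemma7.col (lvl l) p.2, cT l p.2⟩ : ↥T)) := by
        intro k l hkl K
        obtain ⟨π, hπ⟩ := hext k l hkl
        refine ⟨Finset.univ.filter (fun p' : Fin n × (lvl l).J => (p'.1, π p'.2) ∈ K),
          Lemma7.refine_rep_gen π _ _ ?_ K⟩
        intro i j
        have hc : (⟨Lemma7.col (lvl k) j, cT k j⟩ : ↥T)
            = ∑ j', if π j' = j then (⟨Lemma7.col (lvl l) j', cT l j'⟩ : ↥T) else 0 := by
          apply Subtype.ext
          simp only [AddSubmonoidClass.coe_finset_sum]
          rw [Lemma7.col_of_b hπ j]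
          exact Finset.sum_congr rfl (fun j' _ => by split_ifs <;> rfl)
        rw [hc, TensorProduct.tmul_sum]
        refine Finset.sum_congr rfl (fun j' _ => ?_)
        split_ifs
        · rfl
        · rw [TensorProduct.tmul_zero]
      have G2 : ∀ (k : ℕ) (p : Fin n × (lvl k).J),
          ((⟨eAt p.1, heAtS p.1⟩ : ↥S) ⊗ₜ[ℤ] (⟨Lemma7.col (lvl k) p.2, cT k p.2⟩ : ↥T))
          + ((⟨eAt p.1, heAtS p.1⟩ : ↥S) ⊗ₜ[ℤ] (⟨Lemma7.col (lvl k) p.2, cT k p.2⟩ : ↥T))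
          = 0 := by
        intro k p
        rw [← TensorProduct.add_tmul]
        have h0 : (⟨eAt p.1, heAtS p.1⟩ : ↥S) + ⟨eAt p.1, heAtS p.1⟩ = 0 :=
          Subtype.ext (Lemma7.char2 H _)
        rw [h0, TensorProduct.zero_tmul]
      have trep : ∀ z : TensorProduct ℤ ↥S ↥T, ∃ (k : ℕ) (K : Finset (Fin n × (lvl k).J)),
          z = ∑ p ∈ K, ((⟨eAt p.1, heAtS p.1⟩ : ↥S) ⊗ₜ[ℤ]
            (⟨Lemma7.col (lvl k) p.2, cT k p.2⟩ : ↥T)) := by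
        intro z
        induction z using TensorProduct.induction_on with
        | zero => exact ⟨0, ∅, by simp⟩
        | tmul s t =>
          obtain ⟨I, hI⟩ := erep s.1 s.2
          obtain ⟨k, Js, hJs⟩ := t.2
          have hs : s = ∑ i ∈ I, (⟨eAt i, heAtS i⟩ : ↥S) := by
            apply Subtype.ext
            rw [AddSubmonoidClass.coe_finset_sum]
            exact hI
          have ht : t = ∑ j ∈ Js, (⟨Lemma7.col (lvl k) j, cT k j⟩ : ↥T) := by
            apply Subtype.ext
            rw [AddSubmonoidClass.coe_finset_sum]
            exact hJs
          refine ⟨k, I ×ˢ Js, ?_⟩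
          rw [hs, ht, TensorProduct.sum_tmul, Finset.sum_product]
          exact Finset.sum_congr rfl (fun i _ => TensorProduct.tmul_sum _ _ _)
        | add x y ihx ihy =>
          obtain ⟨k1, K1, hK1⟩ := ihx
          obtain ⟨k2, K2, hK2⟩ := ihy
          obtain ⟨K1', h1⟩ := tlift k1 (max k1 k2) (le_max_left _ _) K1
          obtain ⟨K2', h2⟩ := tlift k2 (max k1 k2) (le_max_right _ _) K2
          refine ⟨max k1 k2, symmDiff K1' K2', ?_⟩
          rw [hK1, hK2, h1, h2, Lemma7.sum_add_sum_symmDiff _ (G2 (max k1 k2))]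
      constructor
      · -- injective
        have hker : ∀ z : TensorProduct ℤ ↥S ↥T, H.mulTensor S T z = 0 → z = 0 := by
          intro z hz
          obtain ⟨k, K, rfl⟩ := trep z
          rw [map_sum, Finset.sum_congr rfl (fun p _ => heval k p)] at hz
          have hK : K = ∅ := by
            refine Lemma7.Level.rep_unique hn (lvl k) (B' := ∅) ?_
            rw [Finset.sum_empty]
            exact hz
          rw [hK, Finset.sum_empty]
        intro a b hab
        have h1 : H.mulTensor S T (a - b) = 0 := by rw [map_sub, hab, sub_self]
        exact sub_eq_zero.mp (hker _ h1)
      · -- surjective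
        intro x
        obtain ⟨k, B, hB⟩ := hcover x
        refine ⟨∑ p ∈ B, ((⟨eAt p.1, heAtS p.1⟩ : ↥S) ⊗ₜ[ℤ]
          (⟨Lemma7.col (lvl k) p.2, cT k p.2⟩ : ↥T)), ?_⟩
        rw [map_sum, Finset.sum_congr rfl (fun p _ => heval k p), ← hB]
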